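/- Let I_n(s) := E(s^{Y_n} N_n) and G_n(s) := E(s^{Y_n}) where (Y_n, N_n) satisfies the joint recursion (Y_{n+1}, N_{n+1}) = (Σ_Y − 1, Σ_N)·1_{Σ_Y ≥ 1} built from m i.i.d. copies of (Y_n, N_n). Then I_{n+1}(s) = (m/s)·I_n(s)·G_n(s)^{m−1} − (m/s)·I_n(0)·G_n(0)^{m−1} for all s > 0 where these quantities are finite, where I_n(0) := E(N_n 1_{Y_n = 0}) and G_n(0) := P(Y_n = 0). -/

import Mathlib

open scoped ENNReal

lemma tsum_pmf_map {α β : Type*} (p : PMF α) (h : α → β) (g : β → ℝ≥0∞) :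
    ∑' b, (p.map h) b * g b = ∑' a, p a * g (h a) := by
  simp only [PMF.map_apply, ← ENNReal.tsum_mul_right, ite_mul, zero_mul]
  rw [ENNReal.tsum_comm]
  congr 1; funext a
  rw [tsum_eq_single (h a) (by intro b hb; simp [hb])]
  simp

lemma tsum_pmf_bind {α β : Type*} (p : PMF α) (f : α → PMF β) (g : β → ℝ≥0∞) :
    ∑' b, (p.bind f) b * g b = ∑' a, p a * ∑' b, f a b * g b := by
  simp only [PMF.bind_apply, ← ENNReal.tsum_mul_right]
  rw [ENNReal.tsum_comm]
  congr 1; funext a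
  rw [← ENNReal.tsum_mul_left]
  congr 1; funext b; ring

/-- Law of the componentwise sum of `n` i.i.d. copies of a pair-valued `PMF`. -/
noncomputable def sumIID2 (p : PMF (ℕ × ℕ)) : ℕ → PMF (ℕ × ℕ)
  | 0 => PMF.pure (0, 0)
  | (k+1) => (sumIID2 p k).bind (fun s => p.map (fun a => (a.1 + s.1, a.2 + s.2)))

lemma sumIID2_G (p : PMF (ℕ × ℕ)) (c : ℝ≥0∞) :
    ∀ k, ∑' w : ℕ × ℕ, (sumIID2 p k) w * c ^ w.1 = (∑' w : ℕ × ℕ, p w * c ^ w.1) ^ k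
  | 0 => by
    rw [sumIID2, pow_zero]
    rw [tsum_eq_single ((0,0) : ℕ × ℕ) (by intro b hb; rw [PMF.pure_apply, if_neg hb, zero_mul])]
    simp
  | (k+1) => by
    rw [sumIID2, tsum_pmf_bind]
    have : ∀ t : ℕ × ℕ, (∑' a : ℕ × ℕ, (p.map (fun a => (a.1 + t.1, a.2 + t.2))) a * c ^ a.1)
        = (∑' w : ℕ × ℕ, p w * c ^ w.1) * c ^ t.1 := by
      intro t
      rw [tsum_pmf_map, ← ENNReal.tsum_mul_right]
      congr 1; funext a; simp [pow_add]; ring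
    simp only [this]
    calc ∑' t : ℕ × ℕ, (sumIID2 p k) t * ((∑' w : ℕ × ℕ, p w * c ^ w.1) * c ^ t.1)
        = (∑' w : ℕ × ℕ, p w * c ^ w.1) * ∑' t : ℕ × ℕ, (sumIID2 p k) t * c ^ t.1 := by
          rw [← ENNReal.tsum_mul_left]; congr 1; funext t; ring
      _ = _ := by rw [sumIID2_G p c k]; ring

lemma sumIID2_I (p : PMF (ℕ × ℕ)) (c : ℝ≥0∞) :
    ∀ k, ∑' w : ℕ × ℕ, (sumIID2 p k) w * c ^ w.1 * (w.2 : ℝ≥0∞)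
      = (k : ℝ≥0∞) * (∑' w : ℕ × ℕ, p w * c ^ w.1 * (w.2 : ℝ≥0∞))
          * (∑' w : ℕ × ℕ, p w * c ^ w.1) ^ (k - 1)
  | 0 => by
    rw [tsum_eq_single ((0,0) : ℕ × ℕ) (by
      intro b hb
      rw [show sumIID2 p 0 = PMF.pure (0,0) from rfl, PMF.pure_apply, if_neg hb, zero_mul, zero_mul])]
    simp
  | (k+1) => by
    set I := ∑' w : ℕ × ℕ, p w * c ^ w.1 * (w.2 : ℝ≥0∞) with hI
    set G := ∑' w : ℕ × ℕ, p w * c ^ w.1 with hG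
    have key : ∑' w : ℕ × ℕ, (sumIID2 p (k+1)) w * c ^ w.1 * (w.2 : ℝ≥0∞)
        = I * G ^ k + G * ∑' w : ℕ × ℕ, (sumIID2 p k) w * c ^ w.1 * (w.2 : ℝ≥0∞) := by
      have e1 : ∀ w : ℕ × ℕ, (sumIID2 p (k+1)) w * c ^ w.1 * (w.2 : ℝ≥0∞)
          = (sumIID2 p (k+1)) w * (c ^ w.1 * (w.2 : ℝ≥0∞)) := fun w => by ring
      simp only [e1]
      rw [show sumIID2 p (k+1) = (sumIID2 p k).bind
          (fun s => p.map (fun a => (a.1 + s.1, a.2 + s.2))) from rfl, tsum_pmf_bind]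
      have inner : ∀ t : ℕ × ℕ,
          (∑' b : ℕ × ℕ, (p.map (fun a => (a.1 + t.1, a.2 + t.2))) b * (c ^ b.1 * (b.2 : ℝ≥0∞)))
          = I * c ^ t.1 + G * (c ^ t.1 * (t.2 : ℝ≥0∞)) := by
        intro t
        rw [tsum_pmf_map]
        have : ∀ a : ℕ × ℕ, p a * (c ^ (a.1 + t.1) * ((a.2 + t.2 : ℕ) : ℝ≥0∞))
            = (p a * c ^ a.1 * (a.2 : ℝ≥0∞)) * c ^ t.1 + (p a * c ^ a.1) * (c ^ t.1 * (t.2 : ℝ≥0∞)) := by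
          intro a; push_cast; rw [pow_add]; ring
        simp only [this]
        rw [ENNReal.tsum_add, ENNReal.tsum_mul_right, ENNReal.tsum_mul_right]
      simp only [inner]
      have e2 : ∀ t : ℕ × ℕ, (sumIID2 p k) t * (I * c ^ t.1 + G * (c ^ t.1 * (t.2 : ℝ≥0∞)))
          = I * ((sumIID2 p k) t * c ^ t.1) + G * ((sumIID2 p k) t * c ^ t.1 * (t.2 : ℝ≥0∞)) := by
        intro t; ring
      simp only [e2]
      rw [ENNReal.tsum_add, ENNReal.tsum_mul_left, ENNReal.tsum_mul_left, sumIID2_G]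
    rw [key, sumIID2_I p c k]
    cases k with
    | zero => simp
    | succ j =>
      have hcast : ((j + 1 + 1 : ℕ) : ℝ≥0∞) = ((j+1 : ℕ) : ℝ≥0∞) + 1 := by push_cast; ring
      simp only [Nat.add_sub_cancel, hcast]
      rw [pow_succ]
      ring

/-- One step of the joint recursion:
`(Y', N') = (Σ_Y − 1, Σ_N)` if `Σ_Y ≥ 1` and `(0, 0)` if `Σ_Y = 0`. -/
noncomputable def jointStep (m : ℕ) (p : PMF (ℕ × ℕ)) : PMF (ℕ × ℕ) :=
  (sumIID2 p m).map (fun z => if z.1 = 0 then (0, 0) else (z.1 - 1, z.2))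

theorem stmt16 (m : ℕ) (hm : 2 ≤ m) (P : ℕ → PMF (ℕ × ℕ))
    (hP : ∀ n, P (n+1) = jointStep m (P n)) (n : ℕ) (s : ℝ) (hs : 0 < s)
    (hI : Summable fun z : ℕ × ℕ => ((P n) z).toReal * s ^ z.1 * (z.2 : ℝ))
    (hG : Summable fun z : ℕ × ℕ => ((P n) z).toReal * s ^ z.1) :
    (∑' z : ℕ × ℕ, ((P (n+1)) z).toReal * s ^ z.1 * (z.2 : ℝ))
      = ((m : ℝ) / s) * (∑' z : ℕ × ℕ, ((P n) z).toReal * s ^ z.1 * (z.2 : ℝ))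
          * (∑' z : ℕ × ℕ, ((P n) z).toReal * s ^ z.1) ^ (m - 1)
        - ((m : ℝ) / s)
          * (∑' z : ℕ × ℕ, if z.1 = 0 then ((P n) z).toReal * (z.2 : ℝ) else 0)
          * (∑' z : ℕ × ℕ, if z.1 = 0 then ((P n) z).toReal else 0) ^ (m - 1) := by
  classical
  set p := P n with hp
  set c : ℝ≥0∞ := ENNReal.ofReal s with hc
  have hc0 : c ≠ 0 := (ENNReal.ofReal_pos.mpr hs).ne'
  have hctop : c ≠ ∞ := ENNReal.ofReal_ne_top
  set Ie : ℝ≥0∞ := ∑' w : ℕ × ℕ, p w * c ^ w.1 * (w.2 : ℝ≥0∞) with hIe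
  set Ge : ℝ≥0∞ := ∑' w : ℕ × ℕ, p w * c ^ w.1 with hGe
  set I0e : ℝ≥0∞ := ∑' w : ℕ × ℕ, p w * (0:ℝ≥0∞) ^ w.1 * (w.2 : ℝ≥0∞) with hI0e
  set G0e : ℝ≥0∞ := ∑' w : ℕ × ℕ, p w * (0:ℝ≥0∞) ^ w.1 with hG0e
  -- finiteness from summability
  have hGeq : Ge = ENNReal.ofReal (∑' z : ℕ × ℕ, (p z).toReal * s ^ z.1) := by
    rw [ENNReal.ofReal_tsum_of_nonneg (fun z => by positivity) hG, hGe]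
    exact tsum_congr fun z => by
      rw [ENNReal.ofReal_mul ENNReal.toReal_nonneg, ENNReal.ofReal_pow hs.le,
        ENNReal.ofReal_toReal (PMF.apply_ne_top _ _)]
  have hIeq : Ie = ENNReal.ofReal (∑' z : ℕ × ℕ, (p z).toReal * s ^ z.1 * (z.2 : ℝ)) := by
    rw [ENNReal.ofReal_tsum_of_nonneg (fun z => by positivity) hI, hIe]
    exact tsum_congr fun z => by
      rw [ENNReal.ofReal_mul (by positivity), ENNReal.ofReal_mul ENNReal.toReal_nonneg,
        ENNReal.ofReal_pow hs.le, ENNReal.ofReal_toReal (PMF.apply_ne_top _ _),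
        ENNReal.ofReal_natCast]
  have hGtop : Ge ≠ ∞ := by rw [hGeq]; exact ENNReal.ofReal_ne_top
  have hItop : Ie ≠ ∞ := by rw [hIeq]; exact ENNReal.ofReal_ne_top
  have hzc : ∀ k : ℕ, (0:ℝ≥0∞) ^ k ≤ c ^ k := by
    intro k; cases k with
    | zero => simp
    | succ j => simp [zero_pow]
  have hG0le : G0e ≤ Ge := ENNReal.tsum_le_tsum fun w =>
    mul_le_mul_right (hzc w.1) _
  have hI0le : I0e ≤ Ie := ENNReal.tsum_le_tsum fun w =>
    mul_le_mul_left (mul_le_mul_right (hzc w.1) _) _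
  have hG0top : G0e ≠ ∞ := (lt_of_le_of_lt hG0le hGtop.lt_top).ne
  have hI0top : I0e ≠ ∞ := (lt_of_le_of_lt hI0le hItop.lt_top).ne
  set L : ℝ≥0∞ := ∑' z : ℕ × ℕ, (P (n+1)) z * c ^ z.1 * (z.2 : ℝ≥0∞) with hL
  have hstep : c * L + (m : ℝ≥0∞) * I0e * G0e ^ (m-1) = (m : ℝ≥0∞) * Ie * Ge ^ (m-1) := by
    rw [← sumIID2_I p c m, ← sumIID2_I p 0 m, hL, hP n]
    have hmap : (∑' z : ℕ × ℕ, (jointStep m p) z * c ^ z.1 * (z.2 : ℝ≥0∞))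
        = ∑' w : ℕ × ℕ, (sumIID2 p m) w
            * (if w.1 = 0 then 0 else c ^ (w.1 - 1) * (w.2 : ℝ≥0∞)) := by
      have e1 : ∀ z : ℕ × ℕ, (jointStep m p) z * c ^ z.1 * (z.2 : ℝ≥0∞)
          = (jointStep m p) z * (c ^ z.1 * (z.2 : ℝ≥0∞)) := fun z => by ring
      simp only [e1]
      rw [jointStep, tsum_pmf_map]
      refine tsum_congr fun w => ?_
      by_cases h : w.1 = 0 <;> simp [h]
    rw [hmap, ← ENNReal.tsum_mul_left, ← ENNReal.tsum_add]
    refine tsum_congr fun w => ?_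
    cases hw : w.1 with
    | zero => simp [hw]
    | succ j =>
      simp only [hw, if_neg (Nat.succ_ne_zero j), Nat.add_sub_cancel,
        zero_pow (Nat.succ_ne_zero j), pow_succ, mul_zero, zero_mul, add_zero]
      ring
  have hRtop : (m : ℝ≥0∞) * Ie * Ge ^ (m-1) ≠ ∞ :=
    ENNReal.mul_ne_top (ENNReal.mul_ne_top (ENNReal.natCast_ne_top m) hItop)
      (ENNReal.pow_ne_top hGtop)
  have hI0mtop : (m : ℝ≥0∞) * I0e * G0e ^ (m-1) ≠ ∞ :=
    ENNReal.mul_ne_top (ENNReal.mul_ne_top (ENNReal.natCast_ne_top m) hI0top)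
      (ENNReal.pow_ne_top hG0top)
  have hcLtop : c * L ≠ ∞ := (lt_of_le_of_lt (hstep ▸ le_self_add) hRtop.lt_top).ne
  have hLtop : L ≠ ∞ := fun h => hcLtop (by rw [h, ENNReal.mul_top hc0])
  -- real conversions
  have hLr : (∑' z : ℕ × ℕ, ((P (n+1)) z).toReal * s ^ z.1 * (z.2 : ℝ)) = L.toReal := by
    rw [hL, ENNReal.tsum_toReal_eq (fun z => ENNReal.mul_ne_top
      (ENNReal.mul_ne_top (PMF.apply_ne_top _ _) (ENNReal.pow_ne_top hctop))
      (ENNReal.natCast_ne_top _))]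
    exact tsum_congr fun z => by
      rw [ENNReal.toReal_mul, ENNReal.toReal_mul, ENNReal.toReal_pow,
        ENNReal.toReal_ofReal hs.le, ENNReal.toReal_natCast]
  have hGr : Ge.toReal = ∑' z : ℕ × ℕ, (p z).toReal * s ^ z.1 := by
    rw [hGeq, ENNReal.toReal_ofReal (tsum_nonneg fun z => by positivity)]
  have hIr : Ie.toReal = ∑' z : ℕ × ℕ, (p z).toReal * s ^ z.1 * (z.2 : ℝ) := by
    rw [hIeq, ENNReal.toReal_ofReal (tsum_nonneg fun z => by positivity)]
  have hG0r : G0e.toReal = ∑' z : ℕ × ℕ, if z.1 = 0 then (p z).toReal else 0 := by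
    rw [hG0e, ENNReal.tsum_toReal_eq (fun z => ENNReal.mul_ne_top (PMF.apply_ne_top _ _)
      (ENNReal.pow_ne_top (by simp)))]
    refine tsum_congr fun z => ?_
    cases hz : z.1 with
    | zero => simp [hz]
    | succ j => simp [hz, zero_pow (Nat.succ_ne_zero j)]
  have hI0r : I0e.toReal = ∑' z : ℕ × ℕ, if z.1 = 0 then (p z).toReal * (z.2 : ℝ) else 0 := by
    rw [hI0e, ENNReal.tsum_toReal_eq (fun z => ENNReal.mul_ne_top (ENNReal.mul_ne_top
      (PMF.apply_ne_top _ _) (ENNReal.pow_ne_top (by simp))) (ENNReal.natCast_ne_top _))]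
    refine tsum_congr fun z => ?_
    cases hz : z.1 with
    | zero => simp [hz, ENNReal.toReal_mul]
    | succ j => simp [hz, zero_pow (Nat.succ_ne_zero j)]
  have hmain := congrArg ENNReal.toReal hstep
  rw [ENNReal.toReal_add hcLtop hI0mtop] at hmain
  simp only [ENNReal.toReal_mul, ENNReal.toReal_pow, ENNReal.toReal_natCast,
    hc, ENNReal.toReal_ofReal hs.le] at hmain
  rw [hLr, ← hGr, ← hIr, ← hG0r, ← hI0r]
  have hs' : s ≠ 0 := hs.ne'
  field_simp
  linarith [hmain]
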